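/- In a pre-Hilbert left 𝕆-module H, for all u, v ∈ H and p, q ∈ 𝕆, the real parts satisfy Re⟨[p,q,u], v⟩ = −Re⟨u, [p,q,v]⟩, where [p,q,x] := (pq)·x − p·(q·x). -/

import Mathlib

noncomputable section

/-- The octonions, realized as the Cayley–Dickson double of the quaternions. -/
abbrev 𝕆 : Type := Quaternion ℝ × Quaternion ℝ

/-- Octonion multiplication via the Cayley–Dickson formula
`(a,b)(c,d) = (ac - d̄b, da + bc̄)`. -/
def omul (x y : 𝕆) : 𝕆 :=
  (x.1 * y.1 - star y.2 * x.2, y.2 * x.1 + x.2 * star y.1)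

/-- Octonionic conjugation. -/
def oconj (x : 𝕆) : 𝕆 := (star x.1, -x.2)

/-- The octonion `1`. -/
def oone : 𝕆 := (1, 0)

/-- Real part of an octonion. -/
def ore (x : 𝕆) : ℝ := x.1.re

/-- Embedding of the reals into the octonions. -/
def oreal (r : ℝ) : 𝕆 := ((r : Quaternion ℝ), 0)

/-- Squared norm of an octonion. -/
def onormSq (x : 𝕆) : ℝ := ore (omul x (oconj x))

/-- A pre-Hilbert left `𝕆`-module: a real vector space `H` with an `ℝ`-linear
left `𝕆`-scalar multiplication `sm` satisfying `1·x = x` and the alternating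
left-associator law, together with an `ℝ`-bilinear `𝕆`-valued inner product `inn`
which is `𝕆`-para-linear, hermitian and positive definite. -/
structure PreHilbO (H : Type*) [AddCommGroup H] [Module ℝ H] where
  sm : 𝕆 →ₗ[ℝ] H →ₗ[ℝ] H
  inn : H →ₗ[ℝ] H →ₗ[ℝ] 𝕆
  one_sm : ∀ x : H, sm oone x = x
  alt : ∀ (p q : 𝕆) (x : H),
    sm (omul p q) x - sm p (sm q x) = -(sm (omul q p) x - sm q (sm p x))
  para : ∀ (p : 𝕆) (u v : H), ore (inn (sm p u) v - omul p (inn u v)) = 0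
  herm : ∀ u v : H, inn u v = oconj (inn v u)
  pos : ∀ u : H, ∃ r : ℝ, 0 ≤ r ∧ inn u u = oreal r
  posdef : ∀ u : H, inn u u = 0 → u = 0

lemma myore_sub (a b : 𝕆) : ore (a - b) = ore a - ore b := by simp [ore]
lemma myore_neg (a : 𝕆) : ore (-a) = -ore a := by simp [ore]
lemma myore_oconj (a : 𝕆) : ore (oconj a) = ore a := by simp [ore, oconj]
lemma myore_omul_conj (p a : 𝕆) :
    ore (omul (oconj p) (oconj a)) = ore (omul p a) := by
  obtain ⟨p1, p2⟩ := p; obtain ⟨a1, a2⟩ := a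
  simp [ore, omul, oconj, Quaternion.re_mul]
lemma myoconj_omul (x y : 𝕆) : oconj (omul x y) = omul (oconj y) (oconj x) := by
  obtain ⟨x1, x2⟩ := x; obtain ⟨y1, y2⟩ := y
  simp [omul, oconj, star_mul, star_sub, star_star, Prod.ext_iff, mul_neg, neg_mul,
    sub_eq_add_neg]
lemma myoreal_smul (r : ℝ) : oreal r = r • oone := by
  simp [oreal, oone, Prod.ext_iff, Quaternion.ext_iff, Quaternion.re_one, Quaternion.imI_one,
    Quaternion.imJ_one, Quaternion.imK_one]
lemma myomul_oreal_left (r : ℝ) (q : 𝕆) : omul (oreal r) q = r • q := by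
  obtain ⟨q1, q2⟩ := q
  simp [omul, oreal, Prod.ext_iff, Quaternion.ext_iff, Quaternion.re_mul, mul_comm]
lemma myomul_oreal_right (r : ℝ) (q : 𝕆) : omul q (oreal r) = r • q := by
  obtain ⟨q1, q2⟩ := q
  simp [omul, oreal, Prod.ext_iff, Quaternion.ext_iff, Quaternion.re_mul, mul_comm]
lemma myoconj_eq (p : 𝕆) : oconj p = oreal (2 * ore p) - p := by
  obtain ⟨p1, p2⟩ := p
  simp [oconj, oreal, ore, Prod.ext_iff, Quaternion.ext_iff]
  ring_nf
lemma myomul_sub_left (x y z : 𝕆) : omul (x - y) z = omul x z - omul y z := by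
  simp [omul, Prod.ext_iff, mul_sub, sub_mul]; constructor <;> abel
lemma myomul_sub_right (x y z : 𝕆) : omul x (y - z) = omul x y - omul x z := by
  simp [omul, Prod.ext_iff, mul_sub, sub_mul, star_sub]; constructor <;> abel


lemma mypara' {H : Type*} [AddCommGroup H] [Module ℝ H] (h : PreHilbO H) (p : 𝕆) (u v : H) :
    ore (h.inn (h.sm p u) v) = ore (omul p (h.inn u v)) := by
  have := h.para p u v
  rw [myore_sub, sub_eq_zero] at this
  exact this

lemma myadj {H : Type*} [AddCommGroup H] [Module ℝ H] (h : PreHilbO H) (p : 𝕆) (u v : H) :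
    ore (h.inn (h.sm p u) v) = ore (h.inn u (h.sm (oconj p) v)) := by
  rw [mypara' h p u v, h.herm u (h.sm (oconj p) v), myore_oconj,
    mypara' h (oconj p) v u, h.herm v u, myore_omul_conj]

lemma mysm_oreal {H : Type*} [AddCommGroup H] [Module ℝ H] (h : PreHilbO H) (r : ℝ) (x : H) : h.sm (oreal r) x = r • x := by
  rw [myoreal_smul, map_smul, LinearMap.smul_apply, h.one_sm]

lemma myassoc_real_left {H : Type*} [AddCommGroup H] [Module ℝ H] (h : PreHilbO H) (r : ℝ) (q : 𝕆) (x : H) :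
    h.sm (omul (oreal r) q) x = h.sm (oreal r) (h.sm q x) := by
  rw [myomul_oreal_left, map_smul, LinearMap.smul_apply, mysm_oreal]

lemma myassoc_real_right {H : Type*} [AddCommGroup H] [Module ℝ H] (h : PreHilbO H) (p : 𝕆) (r : ℝ) (x : H) :
    h.sm (omul p (oreal r)) x = h.sm p (h.sm (oreal r) x) := by
  rw [myomul_oreal_right, map_smul, LinearMap.smul_apply, mysm_oreal, map_smul]

lemma myassoc_conj {H : Type*} [AddCommGroup H] [Module ℝ H] (h : PreHilbO H) (p q : 𝕆) (x : H) :
    h.sm (omul (oconj p) (oconj q)) x - h.sm (oconj p) (h.sm (oconj q) x)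
      = h.sm (omul p q) x - h.sm p (h.sm q x) := by
  rw [myoconj_eq p, myoconj_eq q]
  set a := oreal (2 * ore p) with ha
  set b := oreal (2 * ore q) with hb
  have e1 : omul (a - p) (b - q) = omul a b - omul a q - (omul p b - omul p q) := by
    rw [myomul_sub_left, myomul_sub_right, myomul_sub_right]
  rw [e1]
  simp only [map_sub, LinearMap.sub_apply]
  rw [ha, hb]
  rw [myassoc_real_left h _ (oreal (2 * ore q)), myassoc_real_left h _ q,
    myassoc_real_right h p _]
  abel


/-- In a pre-Hilbert left octonionic module:
Re (inn [p,q,u] v) = - Re (inn u [p,q,v]). -/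
theorem stmt_6 {H : Type*} [AddCommGroup H] [Module ℝ H] (h : PreHilbO H)
    (p q : 𝕆) (u v : H) :
    ore (h.inn (h.sm (omul p q) u - h.sm p (h.sm q u)) v)
      = -ore (h.inn u (h.sm (omul p q) v - h.sm p (h.sm q v))) := by
  have key : h.sm (omul (oconj q) (oconj p)) v - h.sm (oconj q) (h.sm (oconj p) v)
      = -(h.sm (omul p q) v - h.sm p (h.sm q v)) := by
    rw [myassoc_conj h q p v, h.alt q p v]
  calc ore (h.inn (h.sm (omul p q) u - h.sm p (h.sm q u)) v)
      = ore (h.inn (h.sm (omul p q) u) v) - ore (h.inn (h.sm p (h.sm q u)) v) := by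
        rw [map_sub, LinearMap.sub_apply, myore_sub]
    _ = ore (h.inn u (h.sm (omul (oconj q) (oconj p)) v))
          - ore (h.inn u (h.sm (oconj q) (h.sm (oconj p) v))) := by
        rw [myadj h (omul p q) u v, myoconj_omul, myadj h p (h.sm q u) v,
          myadj h q u (h.sm (oconj p) v)]
    _ = ore (h.inn u (h.sm (omul (oconj q) (oconj p)) v
          - h.sm (oconj q) (h.sm (oconj p) v))) := by
        rw [map_sub, myore_sub]
    _ = -ore (h.inn u (h.sm (omul p q) v - h.sm p (h.sm q v))) := by
        rw [key, map_neg, myore_neg]
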